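/- Let a, b be natural numbers and n = a + b. Let x be a skew-symmetric n×n complex matrix, written in block form x = [[x₁₁, x₁₂],[x₂₁, x₂₂]] with x₁₁ of size a×a and x₂₂ of size b×b, and suppose the block x₂₂ is invertible. Then every skew-symmetric n×n complex matrix C can be written as C = Y·x + x·Yᵀ + D for some n×n complex matrix Y and some skew-symmetric matrix D whose bottom-right b×b block is zero. (This is the transversality of the section U ↦ B|_U to the rank stratification of skew-symmetric matrices, in the case of a skew-symmetric form B.) -/

import Mathlib

open Matrix

/-- Let `x` be a skew-symmetric `(a+b)×(a+b)` complex matrix whose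
bottom-right `b×b` block is invertible. Then every skew-symmetric matrix `C` can be
written as `C = Y·x + x·Yᵀ + D` with `D` skew-symmetric and having zero bottom-right
`b×b` block. (Indices are modelled by `Fin a ⊕ Fin b`, so the bottom-right block
is `Matrix.toBlocks₂₂`.) -/
theorem transversality_skew (a b : ℕ)
    (x : Matrix (Fin a ⊕ Fin b) (Fin a ⊕ Fin b) ℂ)
    (hx : xᵀ = -x) (hx22 : IsUnit (Matrix.toBlocks₂₂ x)) :
    ∀ C : Matrix (Fin a ⊕ Fin b) (Fin a ⊕ Fin b) ℂ, Cᵀ = -C →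
      ∃ Y D : Matrix (Fin a ⊕ Fin b) (Fin a ⊕ Fin b) ℂ,
        Dᵀ = -D ∧ Matrix.toBlocks₂₂ D = 0 ∧ C = Y * x + x * Yᵀ + D := by
  intro C hC
  set A := Matrix.toBlocks₂₂ x with hA
  have hdet : IsUnit A.det := (Matrix.isUnit_iff_isUnit_det A).mp hx22
  have hAT : Aᵀ = -A := by
    ext i j
    have := congrFun (congrFun hx (Sum.inr i)) (Sum.inr j)
    simpa [hA, Matrix.toBlocks₂₂, Matrix.transpose_apply] using this
  have hCT : (Matrix.toBlocks₂₂ C)ᵀ = -(Matrix.toBlocks₂₂ C) := by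
    ext i j
    have := congrFun (congrFun hC (Sum.inr i)) (Sum.inr j)
    simpa [Matrix.toBlocks₂₂, Matrix.transpose_apply] using this
  have hinvneg : (-A)⁻¹ = -A⁻¹ := by
    apply Matrix.inv_eq_right_inv
    rw [Matrix.neg_mul, Matrix.mul_neg, neg_neg, Matrix.mul_nonsing_inv A hdet]
  set Z : Matrix (Fin b) (Fin b) ℂ := (2:ℂ)⁻¹ • (Matrix.toBlocks₂₂ C * A⁻¹) with hZ
  set Y : Matrix (Fin a ⊕ Fin b) (Fin a ⊕ Fin b) ℂ :=
    Matrix.fromBlocks 0 0 0 Z with hY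
  refine ⟨Y, C - (Y * x + x * Yᵀ), ?_, ?_, by abel⟩
  · rw [Matrix.transpose_sub, Matrix.transpose_add, Matrix.transpose_mul,
      Matrix.transpose_mul, Matrix.transpose_transpose, hx, hC,
      Matrix.mul_neg, Matrix.neg_mul]
    abel
  · have hxblocks : x = Matrix.fromBlocks x.toBlocks₁₁ x.toBlocks₁₂ x.toBlocks₂₁ A :=
      (Matrix.fromBlocks_toBlocks x).symm
    have h1 : Matrix.toBlocks₂₂ (Y * x) = Z * A := by
      conv_lhs => rw [hxblocks, hY]
      simp [Matrix.fromBlocks_multiply]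
    have h2 : Matrix.toBlocks₂₂ (x * Yᵀ) = A * Zᵀ := by
      conv_lhs => rw [hxblocks, hY, Matrix.fromBlocks_transpose]
      simp [Matrix.fromBlocks_multiply]
    have hZA : Z * A = (2:ℂ)⁻¹ • Matrix.toBlocks₂₂ C := by
      rw [hZ, Matrix.smul_mul, Matrix.mul_assoc, Matrix.nonsing_inv_mul A hdet, Matrix.mul_one]
    have hAZ : A * Zᵀ = (2:ℂ)⁻¹ • Matrix.toBlocks₂₂ C := by
      rw [hZ, Matrix.transpose_smul, Matrix.transpose_mul, Matrix.transpose_nonsing_inv, hAT,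
        hCT, Matrix.mul_smul, hinvneg]
      simp [Matrix.mul_neg, ← Matrix.mul_assoc, Matrix.mul_nonsing_inv A hdet]
    have hsub : Matrix.toBlocks₂₂ (C - (Y * x + x * Yᵀ)) =
        Matrix.toBlocks₂₂ C - (Matrix.toBlocks₂₂ (Y * x) + Matrix.toBlocks₂₂ (x * Yᵀ)) := by
      ext i j; simp [Matrix.toBlocks₂₂]
    rw [hsub, h1, h2, hZA, hAZ]
    ext i j
    simp
    ring
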